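/- arXiv:0906.3108 — 3 statements merged into one kernel-verified Lean document; each statement's English description precedes it below -/
import Mathlib

section
/- Let S : Θ → M_d(ℝ) be a twice continuously differentiable map on an open set Θ ⊆ ℝ^{d₀} taking values in symmetric positive definite d×d matrices, and fix θ* ∈ Θ. Then the Hessian at θ = θ* of the function θ ↦ Q(θ) := Tr(S(θ*)^{-1} S(θ) - I_d) - log det(S(θ*)^{-1} S(θ)) equals the matrix Ξ with entries Ξ_{ij} = Tr((∂_{θ_i} S) S^{-1} (∂_{θ_j} S) S^{-1}) evaluated at θ*. -/
open Matrix

private lemma hasFDerivAt_det_one {E : Type*} [NormedAddCommGroup E] [NormedSpace ℝ E]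
    {d : ℕ} {f : E → Matrix (Fin d) (Fin d) ℝ} {x : E}
    {f' : Fin d → Fin d → (E →L[ℝ] ℝ)}
    (hf : ∀ a b, HasFDerivAt (fun θ => f θ a b) (f' a b) x)
    (hone : f x = 1) :
    HasFDerivAt (fun θ => (f θ).det) (∑ i : Fin d, f' i i) x := by
  have h : ∀ σ : Equiv.Perm (Fin d),
      HasFDerivAt (fun θ => ((Equiv.Perm.sign σ : ℤ) : ℝ) * ∏ i, f θ (σ i) i)
        (((Equiv.Perm.sign σ : ℤ) : ℝ) •
          ∑ i : Fin d, (∏ j ∈ Finset.univ.erase i, f x (σ j) j) • f' (σ i) i) x :=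
    fun σ => (HasFDerivAt.finset_prod (fun i _ => hf (σ i) i)).const_mul _
  have H := HasFDerivAt.fun_sum (u := (Finset.univ : Finset (Equiv.Perm (Fin d))))
      (fun σ _ => h σ)
  have hfun : (fun θ => (f θ).det) = fun θ => ∑ σ : Equiv.Perm (Fin d),
      ((Equiv.Perm.sign σ : ℤ) : ℝ) * ∏ i, f θ (σ i) i := by
    funext θ; rw [Matrix.det_apply']
  rw [hfun]
  refine H.congr_fderiv (Eq.symm ?_)
  ext v
  simp only [ContinuousLinearMap.sum_apply, ContinuousLinearMap.smul_apply, smul_eq_mul]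
  symm
  rw [Fintype.sum_eq_single (1 : Equiv.Perm (Fin d))]
  · simp [hone, Matrix.one_apply_eq]
  · intro σ hσ
    have hzero : ∀ i : Fin d, (∏ j ∈ Finset.univ.erase i, f x (σ j) j) = 0 := by
      intro i
      have hex : ∃ a, a ≠ i ∧ σ a ≠ a := by
        by_contra hcon
        push_neg at hcon
        have hfix : ∀ a, σ a = a := by
          intro a
          by_cases hai : a = i
          · subst hai
            by_contra hne
            have h2 : σ (σ a) = σ a := hcon (σ a) hne
            exact hne (σ.injective h2)
          · exact hcon a hai
        exact hσ (Equiv.ext hfix)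
      obtain ⟨a, hai, hsa⟩ := hex
      refine Finset.prod_eq_zero (Finset.mem_erase.mpr ⟨hai, Finset.mem_univ a⟩) ?_
      rw [hone]
      exact Matrix.one_apply_ne hsa
    simp [hzero]

private lemma differentiableAt_det' {E : Type*} [NormedAddCommGroup E] [NormedSpace ℝ E]
    {d : ℕ} {f : E → Matrix (Fin d) (Fin d) ℝ} {x : E}
    (hf : ∀ a b, DifferentiableAt ℝ (fun θ => f θ a b) x) :
    DifferentiableAt ℝ (fun θ => (f θ).det) x := by
  have hfun : (fun θ => (f θ).det) = fun θ => ∑ σ : Equiv.Perm (Fin d),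
      ((Equiv.Perm.sign σ : ℤ) : ℝ) * ∏ i, f θ (σ i) i := by
    funext θ; rw [Matrix.det_apply']
  rw [hfun]
  refine DifferentiableAt.fun_sum fun σ _ => DifferentiableAt.const_mul ?_ _
  exact (HasFDerivAt.finset_prod (fun i _ => (hf (σ i) i).hasFDerivAt)).differentiableAt

private lemma differentiableAt_inv_entry {E : Type*} [NormedAddCommGroup E] [NormedSpace ℝ E]
    {d : ℕ} {f : E → Matrix (Fin d) (Fin d) ℝ} {x : E}
    (hf : ∀ a b, DifferentiableAt ℝ (fun θ => f θ a b) x)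
    (hdet : (f x).det ≠ 0) (p k : Fin d) :
    DifferentiableAt ℝ (fun θ => (f θ)⁻¹ p k) x := by
  have hrw : (fun θ => (f θ)⁻¹ p k)
      = fun θ => ((f θ).det)⁻¹ * ((f θ).updateRow k (Pi.single p 1)).det := by
    funext θ
    rw [Matrix.inv_def, Matrix.smul_apply, Ring.inverse_eq_inv, smul_eq_mul,
      Matrix.adjugate_apply]
  rw [hrw]
  refine DifferentiableAt.mul ((differentiableAt_det' hf).inv hdet) ?_
  refine differentiableAt_det' ?_
  intro a b
  rcases eq_or_ne a k with h | h
  · simpa [Matrix.updateRow_apply, h] using differentiableAt_const ((Pi.single p 1 : Fin d → ℝ) b)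
  · simpa [Matrix.updateRow_apply, h] using hf a b

/-- Let `S : Θ → M_d(ℝ)` be twice continuously differentiable on an open set
`Θ ⊆ ℝ^{d₀}` with symmetric positive definite values, and `θ* ∈ Θ`. Then the Hessian
at `θ*` of `Q(θ) = Tr(S(θ*)⁻¹ S(θ) - I) - log det (S(θ*)⁻¹ S(θ))` has entries
`Ξ_{ij} = Tr((∂ᵢS) S⁻¹ (∂ⱼS) S⁻¹)` evaluated at `θ*`. -/
theorem stmt3 (d d₀ : ℕ) (Θ : Set (Fin d₀ → ℝ)) (hΘ : IsOpen Θ)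
    (S : (Fin d₀ → ℝ) → Matrix (Fin d) (Fin d) ℝ)
    (hS : ∀ a b, ContDiffOn ℝ 2 (fun θ => S θ a b) Θ)
    (hsymm : ∀ θ ∈ Θ, (S θ).IsSymm)
    (hpd : ∀ θ ∈ Θ, (S θ).PosDef)
    (θs : Fin d₀ → ℝ) (hθs : θs ∈ Θ)
    (Q : (Fin d₀ → ℝ) → ℝ)
    (hQ : ∀ θ, Q θ = ((S θs)⁻¹ * S θ - 1).trace - Real.log ((S θs)⁻¹ * S θ).det)
    (Sd : Fin d₀ → Matrix (Fin d) (Fin d) ℝ)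
    (hSd : ∀ i, Sd i = Matrix.of fun a b =>
      fderiv ℝ (fun θ => S θ a b) θs (Pi.single i 1)) :
    ∀ i j : Fin d₀,
      fderiv ℝ (fun θ => fderiv ℝ Q θ (Pi.single i 1)) θs (Pi.single j 1) =
        (Sd i * (S θs)⁻¹ * Sd j * (S θs)⁻¹).trace := by
  intro i j
  have hdet : ∀ θ ∈ Θ, (S θ).det ≠ 0 := fun θ hθ => ne_of_gt (hpd θ hθ).det_pos
  have hunit : ∀ θ ∈ Θ, IsUnit (S θ).det := fun θ hθ => isUnit_iff_ne_zero.mpr (hdet θ hθ)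
  have hdiff : ∀ θ ∈ Θ, ∀ a b, DifferentiableAt ℝ (fun θ' => S θ' a b) θ := by
    intro θ hθ a b
    exact ((hS a b).differentiableOn (by norm_num)).differentiableAt (hΘ.mem_nhds hθ)
  -- first derivative of Q on Θ
  have HQ : ∀ θ₀ ∈ Θ, HasFDerivAt Q
      ((∑ p : Fin d, ∑ k : Fin d, (S θs)⁻¹ p k • fderiv ℝ (fun θ => S θ k p) θ₀)
        - ∑ p : Fin d, ∑ k : Fin d, (S θ₀)⁻¹ p k • fderiv ℝ (fun θ => S θ k p) θ₀) θ₀ := by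
    intro θ₀ hθ₀
    have htr : HasFDerivAt (fun θ => ((S θs)⁻¹ * S θ - 1).trace)
        (∑ p : Fin d, ∑ k : Fin d, (S θs)⁻¹ p k • fderiv ℝ (fun θ => S θ k p) θ₀) θ₀ := by
      have hrw : (fun θ => ((S θs)⁻¹ * S θ - 1).trace)
          = fun θ => (∑ p : Fin d, ∑ k : Fin d, (S θs)⁻¹ p k * S θ k p)
              - ((Fintype.card (Fin d) : ℝ)) := by
        funext θ
        rw [Matrix.trace_sub, Matrix.trace_one]
        simp [Matrix.trace, Matrix.diag, Matrix.mul_apply]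
      rw [hrw]
      exact (HasFDerivAt.fun_sum fun p _ => HasFDerivAt.fun_sum fun k _ =>
        ((hdiff θ₀ hθ₀ k p).hasFDerivAt.const_mul _)).sub_const _
    have hu : ∀ p q : Fin d, HasFDerivAt (fun θ => ((S θ₀)⁻¹ * S θ) p q)
        (∑ k, (S θ₀)⁻¹ p k • fderiv ℝ (fun θ => S θ k q) θ₀) θ₀ := by
      intro p q
      have hrw : (fun θ => ((S θ₀)⁻¹ * S θ) p q)
          = fun θ => ∑ k, (S θ₀)⁻¹ p k * S θ k q := by
        funext θ; rw [Matrix.mul_apply]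
      rw [hrw]
      exact HasFDerivAt.fun_sum fun k _ => ((hdiff θ₀ hθ₀ k q).hasFDerivAt.const_mul _)
    have hone : (S θ₀)⁻¹ * S θ₀ = 1 := Matrix.nonsing_inv_mul _ (hunit θ₀ hθ₀)
    have hdetu : HasFDerivAt (fun θ => ((S θ₀)⁻¹ * S θ).det)
        (∑ p : Fin d, ∑ k : Fin d, (S θ₀)⁻¹ p k • fderiv ℝ (fun θ => S θ k p) θ₀) θ₀ :=
      hasFDerivAt_det_one (fun a b => hu a b) hone
    have h1 : ((S θ₀)⁻¹ * S θ₀).det = 1 := by rw [hone, Matrix.det_one]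
    have hld : HasFDerivAt (fun θ => Real.log ((S θ₀)⁻¹ * S θ).det)
        (∑ p : Fin d, ∑ k : Fin d, (S θ₀)⁻¹ p k • fderiv ℝ (fun θ => S θ k p) θ₀) θ₀ := by
      have h2 := hdetu.log (by rw [h1]; exact one_ne_zero)
      rwa [h1, inv_one, one_smul] at h2
    have hev : Q =ᶠ[nhds θ₀] fun θ => ((S θs)⁻¹ * S θ - 1).trace
        - (Real.log ((S θ₀)⁻¹ * S θ).det + (Real.log (S θ₀).det - Real.log (S θs).det)) := by
      filter_upwards [hΘ.mem_nhds hθ₀] with θ hθ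
      rw [hQ θ]
      have e1 : ((S θs)⁻¹ * S θ).det = ((S θs).det)⁻¹ * (S θ).det := by
        rw [Matrix.det_mul, Matrix.det_nonsing_inv, Ring.inverse_eq_inv]
      have e2 : ((S θ₀)⁻¹ * S θ).det = ((S θ₀).det)⁻¹ * (S θ).det := by
        rw [Matrix.det_mul, Matrix.det_nonsing_inv, Ring.inverse_eq_inv]
      rw [e1, e2, Real.log_mul (inv_ne_zero (hdet θs hθs)) (hdet θ hθ),
        Real.log_mul (inv_ne_zero (hdet θ₀ hθ₀)) (hdet θ hθ), Real.log_inv, Real.log_inv]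
      ring
    exact (htr.sub (hld.add_const _)).congr_of_eventuallyEq hev
  -- the first derivative in direction `e i`, as a function of the base point
  have hev2 : (fun θ => fderiv ℝ Q θ (Pi.single i 1)) =ᶠ[nhds θs]
      (fun θ => ∑ p : Fin d, ∑ k : Fin d,
        ((S θs)⁻¹ p k - (S θ)⁻¹ p k) * fderiv ℝ (fun θ' => S θ' k p) θ (Pi.single i 1)) := by
    filter_upwards [hΘ.mem_nhds hθs] with θ hθ
    rw [(HQ θ hθ).fderiv]
    simp [ContinuousLinearMap.sum_apply, ContinuousLinearMap.sub_apply,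
      ContinuousLinearMap.smul_apply, smul_eq_mul, Finset.sum_sub_distrib, sub_mul]
  rw [hev2.fderiv_eq]
  -- differentiability of the pieces at θs
  have hgd : ∀ k p : Fin d, DifferentiableAt ℝ
      (fun θ => fderiv ℝ (fun θ' => S θ' k p) θ (Pi.single i 1)) θs := by
    intro k p
    have h1 : ContDiffAt ℝ 2 (fun θ => S θ k p) θs := (hS k p).contDiffAt (hΘ.mem_nhds hθs)
    have h2 : ContDiffAt ℝ 1 (fderiv ℝ (fun θ => S θ k p)) θs := h1.fderiv_right (by norm_num)
    exact (h2.clm_apply contDiffAt_const).differentiableAt one_ne_zero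
  have hBd : ∀ p k : Fin d, DifferentiableAt ℝ (fun θ => (S θ)⁻¹ p k) θs :=
    fun p k => differentiableAt_inv_entry (fun a b => hdiff θs hθs a b) (hdet θs hθs) p k
  -- derivative of the inverse-entry matrix, via differentiating S⁻¹ * S = 1
  have hNval : (Matrix.of fun p k => fderiv ℝ (fun θ => (S θ)⁻¹ p k) θs (Pi.single j 1))
      = -((S θs)⁻¹ * Sd j * (S θs)⁻¹) := by
    have hNS : (Matrix.of fun p k => fderiv ℝ (fun θ => (S θ)⁻¹ p k) θs (Pi.single j 1))
        * S θs = -((S θs)⁻¹ * Sd j) := by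
      ext a b
      have hF : HasFDerivAt (fun θ => ∑ k, (S θ)⁻¹ a k * S θ k b)
          (∑ k, ((S θs)⁻¹ a k • fderiv ℝ (fun θ => S θ k b) θs
            + S θs k b • fderiv ℝ (fun θ => (S θ)⁻¹ a k) θs)) θs :=
        HasFDerivAt.fun_sum fun k _ => ((hBd a k).hasFDerivAt.mul (hdiff θs hθs k b).hasFDerivAt)
      have hconst : (fun θ => ∑ k, (S θ)⁻¹ a k * S θ k b) =ᶠ[nhds θs]
          fun _ => (1 : Matrix (Fin d) (Fin d) ℝ) a b := by
        filter_upwards [hΘ.mem_nhds hθs] with θ hθ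
        rw [← Matrix.mul_apply, Matrix.nonsing_inv_mul _ (hunit θ hθ)]
      have h0 : fderiv ℝ (fun θ => ∑ k, (S θ)⁻¹ a k * S θ k b) θs = 0 := by
        rw [hconst.fderiv_eq]; exact fderiv_const_apply _
      have h1 := hF.fderiv
      rw [h0] at h1
      have h2 := congrArg (fun L : (Fin d₀ → ℝ) →L[ℝ] ℝ => L (Pi.single j 1)) h1.symm
      simp only [ContinuousLinearMap.sum_apply, ContinuousLinearMap.add_apply,
        ContinuousLinearMap.smul_apply, smul_eq_mul, ContinuousLinearMap.zero_apply] at h2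
      rw [Finset.sum_add_distrib] at h2
      simp only [Matrix.mul_apply, Matrix.neg_apply, Matrix.of_apply, hSd]
      have hcomm : ∑ k, fderiv ℝ (fun θ => (S θ)⁻¹ a k) θs (Pi.single j 1) * S θs k b
          = ∑ k, S θs k b * fderiv ℝ (fun θ => (S θ)⁻¹ a k) θs (Pi.single j 1) :=
        Finset.sum_congr rfl fun k _ => mul_comm _ _
      rw [hcomm]
      linarith [h2]
    have h3 : (Matrix.of fun p k => fderiv ℝ (fun θ => (S θ)⁻¹ p k) θs (Pi.single j 1))
        * (S θs * (S θs)⁻¹) = -((S θs)⁻¹ * Sd j) * (S θs)⁻¹ := by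
      rw [← Matrix.mul_assoc, hNS]
    rw [Matrix.mul_nonsing_inv _ (hunit θs hθs), Matrix.mul_one] at h3
    rw [h3, Matrix.neg_mul]
  -- second derivative of ψ at θs
  have hψ : HasFDerivAt (fun θ => ∑ p : Fin d, ∑ k : Fin d,
      ((S θs)⁻¹ p k - (S θ)⁻¹ p k) * fderiv ℝ (fun θ' => S θ' k p) θ (Pi.single i 1))
      (∑ p : Fin d, ∑ k : Fin d,
        (((S θs)⁻¹ p k - (S θs)⁻¹ p k) •
            fderiv ℝ (fun θ => fderiv ℝ (fun θ' => S θ' k p) θ (Pi.single i 1)) θs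
          + (fderiv ℝ (fun θ' => S θ' k p) θs (Pi.single i 1)) •
            (-(fderiv ℝ (fun θ => (S θ)⁻¹ p k) θs)))) θs := by
    refine HasFDerivAt.fun_sum fun p _ => HasFDerivAt.fun_sum fun k _ => ?_
    exact ((hBd p k).hasFDerivAt.const_sub _).mul (hgd k p).hasFDerivAt
  rw [hψ.fderiv]
  -- evaluate and conclude
  have hkey : ∀ p k : Fin d, fderiv ℝ (fun θ => (S θ)⁻¹ p k) θs (Pi.single j 1)
      = (-((S θs)⁻¹ * Sd j * (S θs)⁻¹)) p k := by
    intro p k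
    have := Matrix.ext_iff.mpr hNval p k
    simpa using this
  simp only [ContinuousLinearMap.sum_apply, ContinuousLinearMap.add_apply,
    ContinuousLinearMap.smul_apply, ContinuousLinearMap.neg_apply, smul_eq_mul,
    sub_self, zero_mul, zero_add, hkey, Matrix.neg_apply, neg_neg]
  have hgval : ∀ k p : Fin d,
      fderiv ℝ (fun θ' => S θ' k p) θs (Pi.single i 1) = Sd i k p := by
    intro k p; rw [hSd]; rfl
  simp only [hgval]
  rw [show Sd i * (S θs)⁻¹ * Sd j * (S θs)⁻¹
      = Sd i * ((S θs)⁻¹ * Sd j * (S θs)⁻¹) by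
    rw [Matrix.mul_assoc, Matrix.mul_assoc, Matrix.mul_assoc]]
  simp only [Matrix.trace, Matrix.diag_apply, Matrix.mul_apply]
  rw [Finset.sum_comm]
end

section
/- The function f(x) = (3/2) e^{|x|} (1 - Φ((3/2)√|x|)) - ½ (1 - Φ(½ √|x|)), where Φ is the standard normal distribution function, is nonnegative on ℝ. -/
open MeasureTheory Set Real

/-- Standard normal distribution function. -/
noncomputable def stdNormalCdf (x : ℝ) : ℝ :=
  ∫ u in Set.Iic x, Real.exp (-u ^ 2 / 2) / Real.sqrt (2 * Real.pi)

namespace Stmt12Aux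

noncomputable def E (u : ℝ) : ℝ := Real.exp (-u ^ 2 / 2)

lemma E_eq (u : ℝ) : E u = Real.exp (-(1/2) * u ^ 2) := by
  unfold E; ring_nf

lemma intE : Integrable E := by
  have h := integrable_exp_neg_mul_sq (show (0:ℝ) < 1/2 by norm_num)
  refine h.congr ?_
  filter_upwards with u
  rw [E_eq]

lemma E_nonneg (u : ℝ) : 0 ≤ E u := (Real.exp_pos _).le

lemma totE : ∫ u, E u = Real.sqrt (2 * Real.pi) := by
  have h := integral_gaussian (1/2 : ℝ)
  have : ∫ u, E u = ∫ u, Real.exp (-(1/2) * u ^ 2) := by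
    congr 1; ext u; rw [E_eq]
  rw [this, h]
  congr 1
  field_simp

noncomputable def T (a : ℝ) : ℝ := ∫ u in Set.Ioi a, E u

lemma T_nonneg (a : ℝ) : 0 ≤ T a :=
  setIntegral_nonneg measurableSet_Ioi (fun u _ => E_nonneg u)

lemma cdf_eq (a : ℝ) : stdNormalCdf a = (∫ u in Set.Iic a, E u) / Real.sqrt (2 * Real.pi) := by
  unfold stdNormalCdf
  rw [integral_div]
  rfl

lemma one_sub_cdf (a : ℝ) : 1 - stdNormalCdf a = T a / Real.sqrt (2 * Real.pi) := by
  have hs : (0:ℝ) < Real.sqrt (2 * Real.pi) :=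
    Real.sqrt_pos.mpr (by positivity)
  have hsplit : (∫ u in Set.Iic a, E u) + (∫ u in Set.Ioi a, E u) = ∫ u, E u :=
    intervalIntegral.integral_Iic_add_Ioi intE.integrableOn intE.integrableOn
  rw [cdf_eq]
  rw [eq_div_iff hs.ne']
  rw [sub_mul, div_mul_cancel₀ _ hs.ne', one_mul, ← totE, ← hsplit]
  unfold T
  ring

/-- Translation for integrals over `Ioi`. -/
lemma Ioi_shift (g : ℝ → ℝ) (a c : ℝ) :
    ∫ x in Set.Ioi a, g (x + c) = ∫ x in Set.Ioi (a + c), g x := by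
  rw [← integral_indicator measurableSet_Ioi, ← integral_indicator measurableSet_Ioi,
    ← integral_add_right_eq_self (Set.indicator (Set.Ioi (a + c)) g) c]
  congr 1
  ext x
  by_cases h : a < x
  · rw [Set.indicator_of_mem (by simpa using h), Set.indicator_of_mem (by simpa using h)]
  · rw [Set.indicator_of_notMem (by simpa using h), Set.indicator_of_notMem (by simpa using h)]

lemma int_shift (t : ℝ) : Integrable (fun v : ℝ => E (v / 3 + 4 * t / 3)) := by
  have h : Integrable (fun z : ℝ => Real.exp (-(1/2) * z ^ 2)) :=
    integrable_exp_neg_mul_sq (by norm_num)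
  have h2 : Integrable (fun y : ℝ => Real.exp (-(1/2) * (y + 4 * t / 3) ^ 2)) :=
    h.comp_add_right (4 * t / 3)
  refine (h2.comp_div (by norm_num : (3:ℝ) ≠ 0)).congr ?_
  filter_upwards with v
  rw [E_eq]

/-- Substitution: `3 * T (3t/2) = ∫ v in Ioi (t/2), E (v/3 + 4t/3)`. -/
lemma sub_key (t : ℝ) :
    (∫ v in Set.Ioi ((1/2) * t), E (v / 3 + 4 * t / 3)) = 3 * T ((3/2) * t) := by
  have h1 : (∫ v in Set.Ioi ((1/2) * t), E (v / 3 + 4 * t / 3))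
      = ∫ v in Set.Ioi ((1/2) * t), (fun y => E (y + 4 * t / 3)) ((1/3) * v) := by
    congr 1; ext v; simp only; ring_nf
  have h2 := integral_comp_mul_left_Ioi (fun y => E (y + 4 * t / 3)) ((1/2) * t)
    (show (0:ℝ) < 1/3 by norm_num)
  have h3 : (∫ y in Set.Ioi ((1/3) * ((1/2) * t)), E (y + 4 * t / 3))
      = ∫ u in Set.Ioi ((1/3) * ((1/2) * t) + 4 * t / 3), E u := Ioi_shift E _ _
  have h4 : (1/3 : ℝ) * ((1/2) * t) + 4 * t / 3 = (3/2) * t := by ring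
  rw [h1, h2, h3, h4]
  unfold T
  rw [smul_eq_mul]
  norm_num

lemma pointwise (t v : ℝ) : E v ≤ Real.exp (t ^ 2) * E (v / 3 + 4 * t / 3) := by
  unfold E
  rw [← Real.exp_add]
  apply Real.exp_le_exp.mpr
  nlinarith [sq_nonneg (t - 2 * v), sq_nonneg (t + v)]

lemma key (t : ℝ) : T ((1/2) * t) ≤ 3 * Real.exp (t ^ 2) * T ((3/2) * t) := by
  have h : 3 * Real.exp (t ^ 2) * T ((3/2) * t)
      = ∫ v in Set.Ioi ((1/2) * t), Real.exp (t ^ 2) * E (v / 3 + 4 * t / 3) := by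
    rw [integral_const_mul, sub_key]
    ring
  rw [h]
  unfold T
  refine setIntegral_mono intE.integrableOn ((((int_shift t)).const_mul _).integrableOn) ?_
  intro v
  exact pointwise t v

end Stmt12Aux

/-- The density `f(x) = (3/2) e^{|x|} (1 - Φ((3/2)√|x|)) - ½ (1 - Φ(½√|x|))`
of the argmin of two-sided Brownian motion with drift is nonnegative on `ℝ`. -/
theorem stmt12 (f : ℝ → ℝ)
    (hf : ∀ x, f x = (3 / 2) * Real.exp |x| * (1 - stdNormalCdf ((3 / 2) * Real.sqrt |x|))
      - (1 / 2) * (1 - stdNormalCdf ((1 / 2) * Real.sqrt |x|))) :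
    ∀ x, 0 ≤ f x := by
  intro x
  rw [hf x]
  set t := Real.sqrt |x| with ht
  have ht2 : |x| = t ^ 2 := (Real.sq_sqrt (abs_nonneg x)).symm
  rw [ht2]
  rw [Stmt12Aux.one_sub_cdf, Stmt12Aux.one_sub_cdf]
  have hs : (0:ℝ) < Real.sqrt (2 * Real.pi) := Real.sqrt_pos.mpr (by positivity)
  have hinv : (0:ℝ) ≤ (Real.sqrt (2 * Real.pi))⁻¹ := by positivity
  have hkey := Stmt12Aux.key t
  rw [sub_nonneg]
  have h2 : (1/2 : ℝ) * Stmt12Aux.T ((1/2) * t)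
      ≤ (3/2) * Real.exp (t ^ 2) * Stmt12Aux.T ((3/2) * t) := by linarith
  have h3 := mul_le_mul_of_nonneg_right h2 hinv
  calc (1/2 : ℝ) * (Stmt12Aux.T ((1/2) * t) / Real.sqrt (2 * Real.pi))
      = ((1/2 : ℝ) * Stmt12Aux.T ((1/2) * t)) * (Real.sqrt (2 * Real.pi))⁻¹ := by
        rw [div_eq_mul_inv]; ring
    _ ≤ ((3/2) * Real.exp (t ^ 2) * Stmt12Aux.T ((3/2) * t)) * (Real.sqrt (2 * Real.pi))⁻¹ := h3
    _ = (3/2) * Real.exp (t ^ 2) * (Stmt12Aux.T ((3/2) * t) / Real.sqrt (2 * Real.pi)) := by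
        rw [div_eq_mul_inv]; ring
end

section
/- The function f(x) = (3/2) e^{|x|} (1 - Φ((3/2)√|x|)) - ½ (1 - Φ(½ √|x|)) integrates to 1 over ℝ, i.e. ∫_{-∞}^{∞} f(x) dx = 1. -/
open Real MeasureTheory Set Filter Topology

noncomputable def phiAux (u : ℝ) : ℝ := Real.exp (-u ^ 2 / 2) / Real.sqrt (2 * Real.pi)

noncomputable def QAux (t : ℝ) : ℝ := ∫ u in Set.Ioi t, phiAux u

lemma phiAux_eq : phiAux = fun u => Real.exp (-(1/2) * u ^ 2) / Real.sqrt (2 * Real.pi) := by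
  funext u; unfold phiAux; congr 1; ring_nf

lemma phiAux_nonneg (u : ℝ) : 0 ≤ phiAux u :=
  div_nonneg (Real.exp_pos _).le (Real.sqrt_nonneg _)

lemma integrable_phiAux : Integrable phiAux := by
  rw [phiAux_eq]
  exact (integrable_exp_neg_mul_sq (by norm_num : (0:ℝ) < 1/2)).div_const _

lemma sqrt_two_pi_pos : 0 < Real.sqrt (2 * Real.pi) :=
  Real.sqrt_pos.2 (by positivity)

lemma integral_phiAux : ∫ u, phiAux u = 1 := by
  rw [phiAux_eq]
  rw [integral_div, integral_gaussian]
  rw [show Real.pi / (1/2) = 2 * Real.pi by ring]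
  exact div_self sqrt_two_pi_pos.ne'

lemma QAux_nonneg (t : ℝ) : 0 ≤ QAux t :=
  setIntegral_nonneg measurableSet_Ioi fun u _ => phiAux_nonneg u

lemma cdf_add_QAux (t : ℝ) : stdNormalCdf t + QAux t = 1 := by
  have h := intervalIntegral.integral_Iic_add_Ioi (μ := volume) (b := t) (f := phiAux)
    integrable_phiAux.integrableOn integrable_phiAux.integrableOn
  rw [integral_phiAux] at h
  exact h

lemma continuous_phiAux : Continuous phiAux := by
  unfold phiAux
  fun_prop

lemma hasDerivAt_cdf (t : ℝ) : HasDerivAt stdNormalCdf (phiAux t) t := by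
  have heq : stdNormalCdf = fun x => stdNormalCdf 0 + ∫ u in (0:ℝ)..x, phiAux u := by
    funext x
    have h := intervalIntegral.integral_Iic_sub_Iic (μ := volume) (f := phiAux) (a := (0:ℝ)) (b := x)
      integrable_phiAux.integrableOn integrable_phiAux.integrableOn
    have e : ∀ y : ℝ, stdNormalCdf y = ∫ u in Set.Iic y, phiAux u := fun _ => rfl
    rw [e, e]
    linarith [h]
  rw [heq]
  exact (intervalIntegral.integral_hasDerivAt_right integrable_phiAux.intervalIntegrable
    continuous_phiAux.aestronglyMeasurable.stronglyMeasurableAtFilter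
    continuous_phiAux.continuousAt).const_add _

lemma QAux_eq (t : ℝ) : QAux t = 1 - stdNormalCdf t := by
  have := cdf_add_QAux t; linarith

lemma hasDerivAt_QAux (t : ℝ) : HasDerivAt QAux (-(phiAux t)) t := by
  have heq : QAux = fun x => 1 - stdNormalCdf x := funext QAux_eq
  rw [heq]
  simpa using (hasDerivAt_cdf t).const_sub 1

lemma continuous_QAux : Continuous QAux :=
  continuous_iff_continuousAt.2 fun t => (hasDerivAt_QAux t).continuousAt

lemma QAux_zero : QAux 0 = 1/2 := by
  have h : ∫ x : ℝ, phiAux |x| = 2 * ∫ x in Set.Ioi (0:ℝ), phiAux x := integral_comp_abs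
  have h2 : ∀ x : ℝ, phiAux |x| = phiAux x := by
    intro x; unfold phiAux; rw [sq_abs]
  simp_rw [h2] at h
  rw [integral_phiAux] at h
  unfold QAux
  linarith

/-- Mills-type bound. -/
lemma QAux_le {t : ℝ} (ht : 0 < t) :
    QAux t ≤ Real.exp (-t ^ 2 / 2) / (t * Real.sqrt (2 * Real.pi)) := by
  have hint : IntegrableOn (fun u => Real.exp (t ^ 2 / 2) * Real.exp (-t * u) / Real.sqrt (2 * Real.pi)) (Set.Ioi t) := by
    exact (((exp_neg_integrableOn_Ioi t ht).const_mul _).div_const _)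
  have hmono : QAux t ≤ ∫ u in Set.Ioi t, Real.exp (t ^ 2 / 2) * Real.exp (-t * u) / Real.sqrt (2 * Real.pi) := by
    refine setIntegral_mono_on integrable_phiAux.integrableOn hint measurableSet_Ioi ?_
    intro u hu
    unfold phiAux
    rw [← Real.exp_add]
    gcongr
    nlinarith [sq_nonneg (u - t), hu.out]
  calc QAux t ≤ _ := hmono
    _ = Real.exp (-t ^ 2 / 2) / (t * Real.sqrt (2 * Real.pi)) := by
        simp_rw [div_eq_mul_inv, mul_assoc]
        rw [integral_const_mul]
        have : ∀ u : ℝ, Real.exp (-t * u) = Real.exp (-(t * u)) := by intro u; ring_nf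
        simp_rw [this]
        rw [integral_mul_const]
        have h2 := integral_comp_mul_left_Ioi (fun y => Real.exp (-y)) t ht
        simp only [smul_eq_mul] at h2
        rw [h2, integral_exp_neg_Ioi]
        rw [show Real.exp (-(t*t)) = Real.exp (-t^2/2) * Real.exp (-t^2/2) by
          rw [← Real.exp_add]; ring_nf]
        have e3 : rexp (t ^ 2 * 2⁻¹) * rexp (-t ^ 2 / 2) = 1 := by
          rw [← Real.exp_add, show t^2*2⁻¹ + -t^2/2 = 0 by ring, Real.exp_zero]
        have e4 : rexp (-t^2 * 2⁻¹) = rexp (-t^2/2) := by ring_nf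
        rw [mul_inv, e4]
        linear_combination (rexp (-t^2/2) * t⁻¹ * (Real.sqrt (2*Real.pi))⁻¹) * e3

noncomputable def gAux (y : ℝ) : ℝ :=
  (3/2) * Real.exp y * QAux ((3/2) * Real.sqrt y) - (1/2) * QAux ((1/2) * Real.sqrt y)

noncomputable def GAux (x : ℝ) : ℝ :=
  (3/2) * Real.exp x * QAux ((3/2) * Real.sqrt x)
  - (1/2) * (x * QAux ((1/2) * Real.sqrt x))
  - (5/2) * QAux ((1/2) * Real.sqrt x)
  + Real.sqrt x * phiAux ((1/2) * Real.sqrt x)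

lemma continuous_gAux : Continuous gAux := by
  unfold gAux
  exact ((continuous_const.mul Real.continuous_exp).mul
      (continuous_QAux.comp (continuous_const.mul Real.continuous_sqrt))).sub
    (continuous_const.mul (continuous_QAux.comp (continuous_const.mul Real.continuous_sqrt)))

lemma continuous_GAux : Continuous GAux := by
  unfold GAux
  refine ((((continuous_const.mul Real.continuous_exp).mul
      (continuous_QAux.comp (continuous_const.mul Real.continuous_sqrt))).sub
    (continuous_const.mul (continuous_id.mul (continuous_QAux.comp (continuous_const.mul Real.continuous_sqrt))))).sub
    (continuous_const.mul (continuous_QAux.comp (continuous_const.mul Real.continuous_sqrt)))).add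
    (Real.continuous_sqrt.mul (continuous_phiAux.comp (continuous_const.mul Real.continuous_sqrt)))

lemma hasDerivAt_phiAux (t : ℝ) : HasDerivAt phiAux (-t * phiAux t) t := by
  have hinner : HasDerivAt (fun u : ℝ => -u^2/2) (-t) t := by
    have := ((hasDerivAt_pow 2 t).neg).div_const 2
    refine this.congr_deriv ?_
    norm_num
    ring
  have := ((Real.hasDerivAt_exp (-t^2/2)).comp t hinner).div_const (Real.sqrt (2*Real.pi))
  refine this.congr_deriv ?_
  unfold phiAux
  ring

lemma GAux_zero : GAux 0 = -(1/2) := by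
  unfold GAux
  rw [Real.sqrt_zero]
  norm_num [QAux_zero]

lemma key_identity {x : ℝ} (hx : 0 ≤ x) :
    phiAux ((3/2) * Real.sqrt x) = (Real.exp x)⁻¹ * phiAux ((1/2) * Real.sqrt x) := by
  unfold phiAux
  rw [← Real.exp_neg, mul_pow, mul_pow, Real.sq_sqrt hx, ← mul_div_assoc, ← Real.exp_add]
  congr 1
  ring

lemma hasDerivAt_GAux {x : ℝ} (hx : 0 < x) : HasDerivAt GAux (gAux x) x := by
  set s := Real.sqrt x with hs_def
  have hs : 0 < s := Real.sqrt_pos.2 hx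
  have hsx : s ^ 2 = x := Real.sq_sqrt hx.le
  have hsq : HasDerivAt Real.sqrt (1 / (2 * s)) x := Real.hasDerivAt_sqrt hx.ne'
  have h32 : HasDerivAt (fun y => (3/2) * Real.sqrt y) ((3/2) * (1/(2*s))) x := hsq.const_mul _
  have h12 : HasDerivAt (fun y => (1/2) * Real.sqrt y) ((1/2) * (1/(2*s))) x := hsq.const_mul _
  have hQ32 : HasDerivAt (fun y => QAux ((3/2) * Real.sqrt y))
      (-(phiAux ((3/2)*s)) * ((3/2) * (1/(2*s)))) x := (hasDerivAt_QAux _).comp x h32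
  have hQ12 : HasDerivAt (fun y => QAux ((1/2) * Real.sqrt y))
      (-(phiAux ((1/2)*s)) * ((1/2) * (1/(2*s)))) x := (hasDerivAt_QAux _).comp x h12
  have hphi12 : HasDerivAt (fun y => phiAux ((1/2) * Real.sqrt y))
      ((-((1/2)*s) * phiAux ((1/2)*s)) * ((1/2) * (1/(2*s)))) x :=
    (hasDerivAt_phiAux _).comp x h12
  have hexp : HasDerivAt (fun y => (3/2) * Real.exp y) ((3/2) * Real.exp x) x :=
    (Real.hasDerivAt_exp x).const_mul _
  have hA := hexp.mul hQ32
  have hB := ((hasDerivAt_id x).mul hQ12).const_mul (1/2 : ℝ)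
  have hC := hQ12.const_mul (5/2 : ℝ)
  have hD := hsq.mul hphi12
  have total := ((hA.sub hB).sub hC).add hD
  have hfun : GAux = fun y =>
      ((3/2) * Real.exp y * QAux ((3/2) * Real.sqrt y)
        - (1/2) * (y * QAux ((1/2) * Real.sqrt y))
        - (5/2) * QAux ((1/2) * Real.sqrt y))
      + Real.sqrt y * phiAux ((1/2) * Real.sqrt y) := by
    funext y; unfold GAux; ring
  rw [hfun]
  refine total.congr_deriv ?_
  symm
  unfold gAux
  rw [key_identity hx.le, ← hs_def]
  rw [show Real.exp x = Real.exp x from rfl]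
  field_simp
  rw [← hsx]
  simp only [id]
  ring

lemma sqrt_two_pi_ge_two : (2:ℝ) ≤ Real.sqrt (2 * Real.pi) := by
  have h := Real.sq_sqrt (by positivity : (0:ℝ) ≤ 2 * Real.pi)
  nlinarith [Real.pi_gt_three, Real.sqrt_nonneg (2 * Real.pi)]

lemma tendsto_exp_div8 : Tendsto (fun x : ℝ => Real.exp (-x/8)) atTop (𝓝 0) := by
  have h : Tendsto (fun x : ℝ => x/8) atTop atTop := tendsto_id.atTop_div_const (by norm_num)
  have := Real.tendsto_exp_neg_atTop_nhds_zero.comp h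
  refine this.congr fun x => ?_
  simp [Function.comp, neg_div]

lemma tendsto_x_exp_div8 : Tendsto (fun x : ℝ => x * Real.exp (-x/8)) atTop (𝓝 0) := by
  have h : Tendsto (fun x : ℝ => x/8) atTop atTop := tendsto_id.atTop_div_const (by norm_num)
  have h2 := (Real.tendsto_pow_mul_exp_neg_atTop_nhds_zero 1).comp h
  have h3 := h2.const_mul (8:ℝ)
  rw [mul_zero] at h3
  refine h3.congr fun x => ?_
  simp only [Function.comp, pow_one]
  rw [neg_div]
  ring

lemma tendsto_sqrt_atTop : Tendsto Real.sqrt atTop atTop := by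
  refine tendsto_atTop_atTop.2 fun b => ⟨(b ⊔ 0)^2, fun a ha => ?_⟩
  calc b ≤ b ⊔ 0 := le_max_left _ _
    _ = Real.sqrt ((b ⊔ 0)^2) := (Real.sqrt_sq (le_max_right _ _)).symm
    _ ≤ Real.sqrt a := Real.sqrt_le_sqrt ha

lemma tendsto_QAux_atTop : Tendsto QAux atTop (𝓝 0) := by
  apply squeeze_zero' (Eventually.of_forall fun t => QAux_nonneg t)
    (g := fun t => Real.exp (-t/2))
  · filter_upwards [eventually_ge_atTop (1:ℝ)] with t ht
    have ht0 : (0:ℝ) < t := lt_of_lt_of_le one_pos ht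
    refine (QAux_le ht0).trans ?_
    have h1 : Real.exp (-t^2/2) ≤ Real.exp (-t/2) :=
      Real.exp_le_exp.2 (by nlinarith)
    have h2 : (1:ℝ) ≤ t * Real.sqrt (2 * Real.pi) := by
      nlinarith [sqrt_two_pi_ge_two]
    calc Real.exp (-t^2/2) / (t * Real.sqrt (2*Real.pi)) ≤ Real.exp (-t^2/2) :=
          div_le_self (Real.exp_pos _).le h2
      _ ≤ Real.exp (-t/2) := h1
  · have h : Tendsto (fun x : ℝ => x/2) atTop atTop := tendsto_id.atTop_div_const (by norm_num)
    have := Real.tendsto_exp_neg_atTop_nhds_zero.comp h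
    refine this.congr fun x => ?_
    simp [Function.comp, neg_div]

lemma mills_bound1 {x : ℝ} (hx : 1 ≤ x) :
    Real.exp x * QAux ((3/2) * Real.sqrt x) ≤ Real.exp (-x/8) := by
  set s := Real.sqrt x with hs_def
  have hs1 : 1 ≤ s := by
    rw [hs_def, show (1:ℝ) = Real.sqrt 1 by simp]
    exact Real.sqrt_le_sqrt hx
  have hs : 0 < s := lt_of_lt_of_le one_pos hs1
  have hsx : s ^ 2 = x := Real.sq_sqrt (le_trans zero_le_one hx)
  have hQ := QAux_le (t := (3/2)*s) (by positivity)
  have he : ((3/2)*s)^2 = (9/4) * x := by rw [mul_pow, hsx]; norm_num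
  have hden : (1:ℝ) ≤ (3/2)*s * Real.sqrt (2*Real.pi) := by
    nlinarith [sqrt_two_pi_ge_two]
  have h2 : QAux ((3/2)*s) ≤ Real.exp (-(9/4)*x/2) := by
    refine hQ.trans ?_
    rw [he]
    calc Real.exp (-((9/4)*x)/2) / ((3/2)*s * Real.sqrt (2*Real.pi))
        ≤ Real.exp (-((9/4)*x)/2) := div_le_self (Real.exp_pos _).le hden
      _ = Real.exp (-(9/4)*x/2) := by ring_nf
  calc Real.exp x * QAux ((3/2)*s) ≤ Real.exp x * Real.exp (-(9/4)*x/2) := by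
        exact mul_le_mul_of_nonneg_left h2 (Real.exp_pos _).le
    _ = Real.exp (-x/8) := by rw [← Real.exp_add]; congr 1; ring

lemma mills_bound2 {x : ℝ} (hx : 1 ≤ x) :
    QAux ((1/2) * Real.sqrt x) ≤ Real.exp (-x/8) := by
  set s := Real.sqrt x with hs_def
  have hs1 : 1 ≤ s := by
    rw [hs_def, show (1:ℝ) = Real.sqrt 1 by simp]
    exact Real.sqrt_le_sqrt hx
  have hsx : s ^ 2 = x := Real.sq_sqrt (le_trans zero_le_one hx)
  have hQ := QAux_le (t := (1/2)*s) (by positivity)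
  have he : ((1/2)*s)^2 = (1/4) * x := by rw [mul_pow, hsx]; norm_num
  have hden : (1:ℝ) ≤ (1/2)*s * Real.sqrt (2*Real.pi) := by
    nlinarith [sqrt_two_pi_ge_two]
  refine hQ.trans ?_
  rw [he]
  calc Real.exp (-((1/4)*x)/2) / ((1/2)*s * Real.sqrt (2*Real.pi))
      ≤ Real.exp (-((1/4)*x)/2) := div_le_self (Real.exp_pos _).le hden
    _ = Real.exp (-x/8) := by congr 1; ring

lemma integrableOn_gAux : IntegrableOn gAux (Set.Ioi (0:ℝ)) := by
  have h1 : IntegrableOn gAux (Set.Ioc (0:ℝ) 1) :=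
    continuous_gAux.integrableOn_Ioc
  have h2 : IntegrableOn gAux (Set.Ioi (1:ℝ)) := by
    refine Integrable.mono' (g := fun x => 2 * Real.exp (-x/8))
      ?_ continuous_gAux.aestronglyMeasurable.restrict ?_
    · have h0 : IntegrableOn (fun x : ℝ => 2 * Real.exp (-(1/8) * x)) (Set.Ioi 1) :=
        (exp_neg_integrableOn_Ioi 1 (by norm_num)).const_mul 2
      have e : (fun x : ℝ => 2 * Real.exp (-x/8)) = fun x : ℝ => 2 * Real.exp (-(1/8)*x) := by
        funext x; congr 1; ring_nf
      exact e ▸ h0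
    · rw [ae_restrict_iff' measurableSet_Ioi]
      filter_upwards with x hx
      have hx1 : (1:ℝ) ≤ x := le_of_lt hx
      have b1 := mills_bound1 hx1
      have b2 := mills_bound2 hx1
      have q1 : 0 ≤ Real.exp x * QAux ((3/2) * Real.sqrt x) :=
        mul_nonneg (Real.exp_pos _).le (QAux_nonneg _)
      have q2 : 0 ≤ QAux ((1/2) * Real.sqrt x) := QAux_nonneg _
      rw [Real.norm_eq_abs, abs_le]
      unfold gAux
      constructor <;> nlinarith
  have := h1.union h2
  rwa [Set.Ioc_union_Ioi_eq_Ioi (le_of_lt one_pos)] at this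

lemma tendsto_GAux_atTop : Tendsto GAux atTop (𝓝 0) := by
  have hT1 : Tendsto (fun x => (3/2) * Real.exp x * QAux ((3/2) * Real.sqrt x)) atTop (𝓝 0) := by
    apply squeeze_zero'
      (f := fun x => (3/2) * Real.exp x * QAux ((3/2) * Real.sqrt x))
      (g := fun x => (3/2) * Real.exp (-x/8))
    · filter_upwards with x
      exact mul_nonneg (by positivity) (QAux_nonneg _)
    · filter_upwards [eventually_ge_atTop (1:ℝ)] with x hx
      rw [mul_assoc]
      exact mul_le_mul_of_nonneg_left (mills_bound1 hx) (by norm_num)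
    · simpa using tendsto_exp_div8.const_mul (3/2 : ℝ)
  have hT2 : Tendsto (fun x => (1/2) * (x * QAux ((1/2) * Real.sqrt x))) atTop (𝓝 0) := by
    apply squeeze_zero'
      (g := fun x => (1/2) * (x * Real.exp (-x/8)))
    · filter_upwards [eventually_ge_atTop (0:ℝ)] with x hx
      exact mul_nonneg (by norm_num) (mul_nonneg hx (QAux_nonneg _))
    · filter_upwards [eventually_ge_atTop (1:ℝ)] with x hx
      have hx0 : (0:ℝ) ≤ x := le_trans zero_le_one hx
      exact mul_le_mul_of_nonneg_left
        (mul_le_mul_of_nonneg_left (mills_bound2 hx) hx0) (by norm_num)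
    · simpa using tendsto_x_exp_div8.const_mul (1/2 : ℝ)
  have hT3 : Tendsto (fun x => (5/2) * QAux ((1/2) * Real.sqrt x)) atTop (𝓝 0) := by
    have hc : Tendsto (fun x : ℝ => (1/2) * Real.sqrt x) atTop atTop := by
      apply Tendsto.const_mul_atTop (by norm_num : (0:ℝ) < 1/2) _root_.tendsto_sqrt_atTop
    have := (tendsto_QAux_atTop.comp hc).const_mul (5/2 : ℝ)
    simpa using this
  have hT4 : Tendsto (fun x => Real.sqrt x * phiAux ((1/2) * Real.sqrt x)) atTop (𝓝 0) := by
    apply squeeze_zero' (g := fun x => x * Real.exp (-x/8))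
    · filter_upwards with x
      have := phiAux_nonneg ((1/2) * Real.sqrt x)
      positivity
    · filter_upwards [eventually_ge_atTop (1:ℝ)] with x hx
      have hx0 : (0:ℝ) ≤ x := le_trans zero_le_one hx
      have hsx : (Real.sqrt x) ^ 2 = x := Real.sq_sqrt hx0
      have hs1 : 1 ≤ Real.sqrt x := by
        rw [show (1:ℝ) = Real.sqrt 1 by simp]
        exact Real.sqrt_le_sqrt hx
      have hphi : phiAux ((1/2) * Real.sqrt x) = Real.exp (-x/8) / Real.sqrt (2*Real.pi) := by
        unfold phiAux
        congr 2
        rw [mul_pow, hsx]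
        ring
      have hsqle : Real.sqrt x ≤ x := by nlinarith
      rw [hphi]
      have h1 : Real.exp (-x/8) / Real.sqrt (2*Real.pi) ≤ Real.exp (-x/8) :=
        div_le_self (Real.exp_pos _).le (by linarith [sqrt_two_pi_ge_two])
      have h2 : 0 ≤ Real.exp (-x/8) / Real.sqrt (2*Real.pi) := by positivity
      exact mul_le_mul hsqle h1 h2 hx0
    · exact tendsto_x_exp_div8
  have total := ((hT1.sub hT2).sub hT3).add hT4
  simp only [sub_zero, add_zero, zero_sub, neg_zero, zero_add] at total
  exact total.congr fun x => by unfold GAux; ring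

lemma integral_gAux_Ioi : ∫ x in Set.Ioi (0:ℝ), gAux x = 1/2 := by
  have h := integral_Ioi_of_hasDerivAt_of_tendsto
    (f := GAux) (f' := gAux) (a := 0) (m := 0)
    continuous_GAux.continuousWithinAt
    (fun x hx => hasDerivAt_GAux hx)
    integrableOn_gAux
    tendsto_GAux_atTop
  rw [h, GAux_zero]
  norm_num

/-- The density `f(x) = (3/2) e^{|x|} (1 - Φ((3/2)√|x|)) - ½ (1 - Φ(½√|x|))`
integrates to `1` over `ℝ`. -/
theorem stmt13 (f : ℝ → ℝ)
    (hf : ∀ x, f x = (3 / 2) * Real.exp |x| * (1 - stdNormalCdf ((3 / 2) * Real.sqrt |x|))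
      - (1 / 2) * (1 - stdNormalCdf ((1 / 2) * Real.sqrt |x|))) :
    ∫ x, f x = 1 := by
  have hfg : f = fun x => gAux |x| := by
    funext x
    rw [hf]
    unfold gAux
    rw [← QAux_eq, ← QAux_eq]
  rw [hfg, integral_comp_abs (f := gAux), integral_gAux_Ioi]
  norm_num
end
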